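/- With the domains D ⊂ S^c setup of the non-regular pre-model example: let S = {z : -1 < Re z < 1}, let D = ∩_k D_k with D_k = ℂ \ {z : Re z = ±(1+1/k), Im z ≤ y_k}, and suppose α_k is a strictly decreasing sequence with k_D(i(α_k + 1/2), i(α_k - 1/2)) ≤ (1 + 1/(2k))·k_{D_k}(i(α_k + 1/2), i(α_k - 1/2)) for all k. Then, using that k_{D_k} ≤ k_{S_k} where S_k = {z : |Re z| < 1 + 1/k}, and k_{S_k}(i(α-1/2), i(α+1/2)) = π/(4(1+1/k)), k_S(same points) = π/4, one gets k_S(0, i(α_k + 1/2)) - k_D(0, i(α_k + 1/2)) ≥ (π/8)·∑_{j=1}^{k-1} 1/(1+j), hence limsup_{t→+∞} [k_S(0, -it) - k_D(0, -it)] = +∞. -/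

import Mathlib

open Filter

/-- The Poincaré (hyperbolic) distance of the unit disc, with density `1/(1-|z|²)`:
`ω(z,w) = arctanh |(z-w)/(1 - z̄ w)|`, where `arctanh x = ½ log((1+x)/(1-x))`. -/
noncomputable def poincare (z w : ℂ) : ℝ :=
  (1 / 2) * Real.log ((1 + ‖(z - w) / (1 - (starRingEnd ℂ) z * w)‖) /
    (1 - ‖(z - w) / (1 - (starRingEnd ℂ) z * w)‖))

/-- `Dslit y k` is the plane with the two vertical rays
`{Re z = ±(1 + 1/(k+1)), Im z ≤ y k}` removed (the domain `D_{k+1}` of the paper,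
reindexed from `0`). -/
def Dslit (y : ℕ → ℝ) (k : ℕ) : Set ℂ :=
  {z : ℂ | ¬ ((z.re = 1 + 1 / (k + 1 : ℝ) ∨ z.re = -(1 + 1 / (k + 1 : ℝ))) ∧ z.im ≤ y k)}

noncomputable def Complex.abs : AbsoluteValue ℂ ℝ where
  toFun z := ‖z‖
  map_mul' := norm_mul
  nonneg' := norm_nonneg
  eq_zero' _ := norm_eq_zero
  add_le' := norm_add_le

lemma Complex.norm_eq_abs (z : ℂ) : ‖z‖ = Complex.abs z := rfl

lemma Complex.abs_conj (z : ℂ) : Complex.abs ((starRingEnd ℂ) z) = Complex.abs z :=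
  Complex.norm_conj z

lemma Complex.abs_apply (z : ℂ) : Complex.abs z = Real.sqrt (Complex.normSq z) :=
  Complex.norm_def z

lemma Complex.abs_ofReal (r : ℝ) : Complex.abs (r : ℂ) = |r| := Complex.norm_real r

lemma Complex.sq_abs (z : ℂ) : Complex.abs z ^ 2 = Complex.normSq z := Complex.sq_norm z

lemma Complex.abs_re_le_abs (z : ℂ) : |z.re| ≤ Complex.abs z := Complex.abs_re_le_norm z

open Complex Metric Set Topology

namespace PM

variable {a b c z w : ℂ}

noncomputable def mb (a z : ℂ) : ℂ := (a - z) / (1 - (starRingEnd ℂ) a * z)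

lemma poincare_def (z w : ℂ) :
    poincare z w = (1/2) * Real.log ((1 + Complex.abs (mb z w)) / (1 - Complex.abs (mb z w))) := rfl

noncomputable def H (x : ℝ) : ℝ := (1/2) * Real.log ((1+x)/(1-x))

lemma poincare_eq_H (z w : ℂ) : poincare z w = H (Complex.abs (mb z w)) := rfl

lemma H_mono {x y : ℝ} (hx : 0 ≤ x) (hxy : x ≤ y) (hy : y < 1) : H x ≤ H y := by
  have h1 : (0:ℝ) < 1 - y := by linarith
  have h2 : (0:ℝ) < 1 - x := by linarith
  have h : (1+x)/(1-x) ≤ (1+y)/(1-y) := by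
    rw [div_le_div_iff₀ h2 h1]; nlinarith
  have hpos : (0:ℝ) < (1+x)/(1-x) := by positivity
  exact mul_le_mul_of_nonneg_left (Real.log_le_log hpos h) (by norm_num)

lemma H_nonneg {x : ℝ} (hx : 0 ≤ x) (hy : x < 1) : 0 ≤ H x := by
  have h0 : H 0 = 0 := by simp [H]
  rw [← h0]; exact H_mono le_rfl hx hy

lemma H_add {p q : ℝ} (hp : 0 ≤ p) (hp1 : p < 1) (hq : 0 ≤ q) (hq1 : q < 1) :
    H ((p+q)/(1+p*q)) = H p + H q := by
  have hpq : (0:ℝ) < 1 + p*q := by nlinarith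
  have h1p : (0:ℝ) < 1 - p := by linarith
  have h1q : (0:ℝ) < 1 - q := by linarith
  have e1 : 1 + (p+q)/(1+p*q) = (1+p)*(1+q)/(1+p*q) := by field_simp; ring
  have e2 : 1 - (p+q)/(1+p*q) = (1-p)*(1-q)/(1+p*q) := by field_simp; ring
  unfold H
  rw [e1, e2, show (1+p)*(1+q)/(1+p*q) / ((1-p)*(1-q)/(1+p*q))
      = ((1+p)/(1-p)) * ((1+q)/(1-q)) by field_simp]
  rw [Real.log_mul (by positivity) (by positivity)]
  ring

lemma one_sub_conj_ne {a z : ℂ} (ha : Complex.abs a < 1) (hz : Complex.abs z < 1) :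
    1 - (starRingEnd ℂ) a * z ≠ 0 := by
  intro h
  have h1 : (starRingEnd ℂ) a * z = 1 := by linear_combination -h
  have : Complex.abs ((starRingEnd ℂ) a * z) = 1 := by simp [h1]
  rw [map_mul, Complex.abs_conj] at this
  nlinarith [Complex.abs.nonneg a, Complex.abs.nonneg z]

lemma normSq_identity (a z : ℂ) :
    Complex.normSq (1 - (starRingEnd ℂ) a * z) - Complex.normSq (a - z)
      = (1 - Complex.normSq a) * (1 - Complex.normSq z) := by
  simp only [Complex.normSq_apply, Complex.sub_re, Complex.sub_im, Complex.mul_re,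
    Complex.mul_im, Complex.one_re, Complex.one_im, Complex.conj_re, Complex.conj_im]
  ring

lemma abs_mb_lt_one {a z : ℂ} (ha : Complex.abs a < 1) (hz : Complex.abs z < 1) :
    Complex.abs (mb a z) < 1 := by
  have hden := one_sub_conj_ne ha hz
  have h1 : Complex.normSq a < 1 := by
    rw [← Complex.sq_abs]; nlinarith [Complex.abs.nonneg a]
  have h2 : Complex.normSq z < 1 := by
    rw [← Complex.sq_abs]; nlinarith [Complex.abs.nonneg z]
  have key := normSq_identity a z
  have hdpos : 0 < Complex.normSq (1 - (starRingEnd ℂ) a * z) := by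
    rwa [Complex.normSq_pos]
  have hnum : Complex.normSq (a - z) < Complex.normSq (1 - (starRingEnd ℂ) a * z) := by
    nlinarith [Complex.normSq_nonneg (a-z)]
  have habs : 0 < Complex.abs (1 - (starRingEnd ℂ) a * z) := Complex.abs.pos hden
  rw [mb, map_div₀, div_lt_one habs]
  rw [← Real.sqrt_lt_sqrt_iff (Complex.normSq_nonneg _)] at hnum
  simpa [Complex.abs_apply] using hnum

lemma one_sub_conj_ne' (ha : Complex.abs a < 1) (hz : Complex.abs z < 1) :
    1 - a * (starRingEnd ℂ) z ≠ 0 := fun h => one_sub_conj_ne ha hz (by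
  have := congrArg (starRingEnd ℂ) h
  simpa [map_sub, map_mul] using this)

lemma mb_self (a : ℂ) : mb a a = 0 := by simp [mb]

lemma mb_invol (ha : Complex.abs a < 1) (hz : Complex.abs z < 1) : mb a (mb a z) = z := by
  have h1 := one_sub_conj_ne ha hz
  have h2 := one_sub_conj_ne ha ha
  have h3 : 1 - (starRingEnd ℂ) a * mb a z ≠ 0 := one_sub_conj_ne ha (abs_mb_lt_one ha hz)
  simp only [mb] at h3 ⊢
  rw [div_eq_iff h3]
  have h3' : (1 - (starRingEnd ℂ) a * z) - (starRingEnd ℂ) a * (a - z) ≠ 0 := by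
    intro h; apply h3
    rw [sub_eq_zero] at h ⊢
    field_simp
    linear_combination h
  have h1' : 1 - z * (starRingEnd ℂ) a ≠ 0 := by rwa [mul_comm]
  field_simp
  ring

lemma abs_one_sub_conj_symm (a z : ℂ) :
    Complex.abs (1 - (starRingEnd ℂ) a * z) = Complex.abs (1 - a * (starRingEnd ℂ) z) := by
  have h : 1 - a * (starRingEnd ℂ) z = (starRingEnd ℂ) (1 - (starRingEnd ℂ) a * z) := by
    simp only [map_sub, map_mul, map_one, Complex.conj_conj]
  rw [h, Complex.abs_conj]

lemma abs_mb_symm (a z : ℂ) : Complex.abs (mb a z) = Complex.abs (mb z a) := by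
  unfold mb
  rw [map_div₀, map_div₀, abs_one_sub_conj_symm a z, Complex.abs.map_sub a z,
    mul_comm a ((starRingEnd ℂ) z)]

lemma mb_sub (ha : Complex.abs a < 1) (hz : Complex.abs z < 1) (hw : Complex.abs w < 1) :
    mb a z - mb a w = ((a * (starRingEnd ℂ) a - 1) * (z - w)) /
      ((1 - (starRingEnd ℂ) a * z) * (1 - (starRingEnd ℂ) a * w)) := by
  have h1 := one_sub_conj_ne ha hz
  have h2 := one_sub_conj_ne ha hw
  have h1' : 1 - z * (starRingEnd ℂ) a ≠ 0 := by rwa [mul_comm]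
  unfold mb; field_simp; ring

lemma mb_one_sub (ha : Complex.abs a < 1) (hz : Complex.abs z < 1) (hw : Complex.abs w < 1) :
    1 - (starRingEnd ℂ) (mb a z) * mb a w = ((1 - a * (starRingEnd ℂ) a) * (1 - (starRingEnd ℂ) z * w)) /
      ((1 - a * (starRingEnd ℂ) z) * (1 - (starRingEnd ℂ) a * w)) := by
  have h1 := one_sub_conj_ne' ha hz
  have h2 := one_sub_conj_ne ha hw
  unfold mb
  rw [map_div₀, map_sub, map_sub, map_one, map_mul, Complex.conj_conj]
  have h1' : 1 - (starRingEnd ℂ) z * a ≠ 0 := by rwa [mul_comm]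
  field_simp
  ring

lemma abs_mb_invariant (ha : Complex.abs a < 1) (hz : Complex.abs z < 1) (hw : Complex.abs w < 1) :
    Complex.abs (mb (mb a z) (mb a w)) = Complex.abs (mb z w) := by
  have h1 := one_sub_conj_ne ha hz
  have h2 := one_sub_conj_ne ha hw
  have h3 := one_sub_conj_ne' ha hz
  have h4 := one_sub_conj_ne' ha ha
  have h5 := one_sub_conj_ne hz hw
  rw [show mb (mb a z) (mb a w) = (mb a z - mb a w) / (1 - (starRingEnd ℂ) (mb a z) * mb a w) from rfl]
  rw [mb_sub ha hz hw, mb_one_sub ha hz hw]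
  rw [map_div₀, map_div₀, map_div₀, map_mul, map_mul, map_mul, map_mul]
  rw [show mb z w = (z - w)/(1 - (starRingEnd ℂ) z * w) from rfl, map_div₀]
  rw [abs_one_sub_conj_symm a z]
  have e1 : Complex.abs (a * (starRingEnd ℂ) a - 1) = Complex.abs (1 - a * (starRingEnd ℂ) a) :=
    Complex.abs.map_sub _ _
  rw [e1]
  have nA : Complex.abs (1 - a * (starRingEnd ℂ) a) ≠ 0 := Complex.abs.ne_zero h4
  have nB : Complex.abs (1 - a * (starRingEnd ℂ) z) ≠ 0 := Complex.abs.ne_zero h3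
  have nC : Complex.abs (1 - (starRingEnd ℂ) a * w) ≠ 0 := Complex.abs.ne_zero h2
  have nD : Complex.abs (1 - (starRingEnd ℂ) z * w) ≠ 0 := Complex.abs.ne_zero h5
  field_simp

lemma mb_mapsTo (ha : Complex.abs a < 1) : MapsTo (mb a) (ball (0:ℂ) 1) (ball (0:ℂ) 1) := by
  intro z hz
  rw [mem_ball_zero_iff] at hz ⊢
  exact abs_mb_lt_one ha hz

lemma mb_diffOn (ha : Complex.abs a < 1) : DifferentiableOn ℂ (mb a) (ball (0:ℂ) 1) := by
  intro z hz
  rw [mem_ball_zero_iff] at hz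
  exact ((differentiable_const a).sub differentiable_id).differentiableAt.div
    (((differentiable_const (1:ℂ)).sub ((differentiable_const _).mul differentiable_id)).differentiableAt)
    (one_sub_conj_ne ha hz) |>.differentiableWithinAt

theorem schwarz_pick {f : ℂ → ℂ} (hf : DifferentiableOn ℂ f (ball (0:ℂ) 1))
    (hmaps : MapsTo f (ball (0:ℂ) 1) (ball (0:ℂ) 1))
    (hz : z ∈ ball (0:ℂ) 1) (hw : w ∈ ball (0:ℂ) 1) :
    poincare (f z) (f w) ≤ poincare z w := by
  rw [mem_ball_zero_iff] at hz hw
  have hfz : Complex.abs (f z) < 1 := by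
    have := hmaps (mem_ball_zero_iff.2 hz); rwa [mem_ball_zero_iff] at this
  set g : ℂ → ℂ := fun u => mb (f z) (f (mb z u)) with hg
  have hgd : DifferentiableOn ℂ g (ball (0:ℂ) 1) :=
    ((mb_diffOn hfz).comp (hf.comp (mb_diffOn hz) (mb_mapsTo hz))
      (hmaps.comp (mb_mapsTo hz)))
  have hgm : MapsTo g (ball (0:ℂ) 1) (ball (0:ℂ) 1) :=
    (mb_mapsTo hfz).comp (hmaps.comp (mb_mapsTo hz))
  have hg0 : g 0 = 0 := by
    have : mb z 0 = z := by simp [mb]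
    rw [hg]; simp only [this, mb_self]
  have habs : Complex.abs (mb z w) < 1 := abs_mb_lt_one hz hw
  have key := Complex.norm_le_norm_of_mapsTo_ball hgd (hgm.mono_right ball_subset_closedBall) hg0 (z := mb z w) habs
  rw [hg] at key
  simp only [mb_invol hz hw] at key
  rw [poincare_eq_H, poincare_eq_H]
  exact H_mono (Complex.abs.nonneg _) key habs

lemma sq_le_of_le {A B : ℝ} (hA : 0 ≤ A) (hB : 0 ≤ B) (h : A^2 ≤ B^2) : A ≤ B := by nlinarith

lemma key_ineq (hz : Complex.abs z < 1) (hw : Complex.abs w < 1) :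
    Complex.abs (mb z w) ≤ (Complex.abs z + Complex.abs w) / (1 + Complex.abs z * Complex.abs w) := by
  set m := Complex.abs z with hm
  set n := Complex.abs w with hn
  have hm0 : 0 ≤ m := Complex.abs.nonneg z
  have hn0 : 0 ≤ n := Complex.abs.nonneg w
  set t := (z * (starRingEnd ℂ) w).re with ht
  have habs_t : |t| ≤ m * n := by
    rw [ht]
    calc |(z * (starRingEnd ℂ) w).re| ≤ Complex.abs (z * (starRingEnd ℂ) w) := Complex.abs_re_le_abs _
    _ = m * n := by rw [map_mul, Complex.abs_conj]
  have hm2 : m^2 = z.re^2 + z.im^2 := by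
    rw [hm, Complex.sq_abs, Complex.normSq_apply]; ring
  have hn2 : n^2 = w.re^2 + w.im^2 := by
    rw [hn, Complex.sq_abs, Complex.normSq_apply]; ring
  have ht' : t = z.re*w.re + z.im*w.im := by
    rw [ht, Complex.mul_re, Complex.conj_re, Complex.conj_im]; ring
  have q1 : (Complex.abs (z-w))^2 = m^2+n^2-2*t := by
    rw [Complex.sq_abs, Complex.normSq_apply]
    simp only [Complex.sub_re, Complex.sub_im]
    linear_combination -hm2 - hn2 + 2*ht'
  have q2 : (Complex.abs (1 - (starRingEnd ℂ) z * w))^2 = 1+m^2*n^2-2*t := by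
    rw [Complex.sq_abs, Complex.normSq_apply]
    simp only [Complex.sub_re, Complex.sub_im, Complex.mul_re, Complex.mul_im,
      Complex.one_re, Complex.one_im, Complex.conj_re, Complex.conj_im]
    have hmn : m^2*n^2 = (z.re^2+z.im^2)*(w.re^2+w.im^2) := by rw [hm2, hn2]
    linear_combination -hmn + 2*ht'
  have hden := one_sub_conj_ne hz hw
  have hdenpos : 0 < Complex.abs (1 - (starRingEnd ℂ) z * w) := Complex.abs.pos hden
  have h1mn : (0:ℝ) < 1 + m*n := by nlinarith
  rw [mb, map_div₀, div_le_div_iff₀ hdenpos h1mn]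
  apply sq_le_of_le (by positivity) (by positivity)
  have hm1 : m < 1 := hm ▸ hz
  have hn1 : n < 1 := hn ▸ hw
  have hkey : 0 ≤ (t + m*n) * ((1-m)*(1+m)*(1-n)*(1+n)) := by
    apply mul_nonneg
    · cases' abs_le.1 habs_t with h _; linarith
    · apply le_of_lt
      apply mul_pos (mul_pos (mul_pos (by linarith) (by linarith)) (by linarith)) (by linarith)
  rw [mul_pow, mul_pow, q1, q2]
  nlinarith [hkey]

theorem poincare_triangle (ha : a ∈ ball (0:ℂ) 1) (hb : b ∈ ball (0:ℂ) 1) (hc : c ∈ ball (0:ℂ) 1) :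
    poincare a c ≤ poincare a b + poincare b c := by
  rw [mem_ball_zero_iff] at ha hb hc
  set p := Complex.abs (mb b a) with hp
  set q := Complex.abs (mb b c) with hq
  have hp0 : 0 ≤ p := Complex.abs.nonneg _
  have hq0 : 0 ≤ q := Complex.abs.nonneg _
  have hp1 : p < 1 := abs_mb_lt_one hb ha
  have hq1 : q < 1 := abs_mb_lt_one hb hc
  have hinv : Complex.abs (mb (mb b a) (mb b c)) = Complex.abs (mb a c) :=
    abs_mb_invariant hb ha hc
  have hkey : Complex.abs (mb a c) ≤ (p+q)/(1+p*q) := by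
    rw [← hinv]
    exact key_ineq (abs_mb_lt_one hb ha) (abs_mb_lt_one hb hc)
  have hlt : (p+q)/(1+p*q) < 1 := by
    rw [div_lt_one (by nlinarith)]; nlinarith
  rw [poincare_eq_H, poincare_eq_H, poincare_eq_H]
  calc H (Complex.abs (mb a c)) ≤ H ((p+q)/(1+p*q)) := H_mono (Complex.abs.nonneg _) hkey hlt
  _ = H p + H q := H_add hp0 hp1 hq0 hq1
  _ = H (Complex.abs (mb a b)) + H (Complex.abs (mb b c)) := by rw [abs_mb_symm a b]

lemma poincare_nonneg (ha : a ∈ ball (0:ℂ) 1) (hb : b ∈ ball (0:ℂ) 1) : 0 ≤ poincare a b := by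
  rw [mem_ball_zero_iff] at ha hb
  exact H_nonneg (Complex.abs.nonneg _) (abs_mb_lt_one ha hb)

noncomputable def Gm (r : ℝ) (w : ℂ) : ℂ :=
  Complex.I * (2*r/Real.pi) * Complex.log ((1+w)/(1-w))

noncomputable def xr (r s : ℝ) : ℝ :=
  (Real.exp (Real.pi*s/(2*r)) - 1) / (Real.exp (Real.pi*s/(2*r)) + 1)

lemma xr_lt_one (r s : ℝ) : |xr r s| < 1 := by
  have he := Real.exp_pos (Real.pi*s/(2*r))
  rw [xr, abs_lt]
  constructor
  · rw [neg_lt, ← neg_div, div_lt_one (by linarith)]; linarith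
  · rw [div_lt_one (by linarith)]; linarith

lemma xr_mem (r s : ℝ) : (xr r s : ℂ) ∈ ball (0:ℂ) 1 := by
  rw [mem_ball_zero_iff, Complex.norm_eq_abs, Complex.abs_ofReal]; exact xr_lt_one r s

lemma xr_ratio (r s : ℝ) :
    (1 + (xr r s : ℂ)) / (1 - (xr r s : ℂ)) = (Real.exp (Real.pi*s/(2*r)) : ℂ) := by
  have he := Real.exp_pos (Real.pi*s/(2*r))
  have hne : 1 - xr r s ≠ 0 := by
    have h := abs_lt.1 (xr_lt_one r s); intro hc; linarith [h.2]
  have hreal : (1 + xr r s) / (1 - xr r s) = Real.exp (Real.pi*s/(2*r)) := by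
    rw [div_eq_iff hne, xr]
    field_simp
    ring
  calc (1 + (xr r s : ℂ)) / (1 - (xr r s : ℂ))
      = ((( 1 + xr r s) / (1 - xr r s) : ℝ) : ℂ) := by push_cast; ring
  _ = (Real.exp (Real.pi*s/(2*r)) : ℂ) := by rw [hreal]

lemma Gm_xr {r : ℝ} (hr : 0 < r) (s : ℝ) : Gm r (xr r s) = Complex.I * s := by
  rw [Gm, xr_ratio r s, show ((Real.exp (Real.pi*s/(2*r)) : ℝ) : ℂ)
      = ((Real.exp (Real.pi*s/(2*r)) : ℝ) : ℂ) from rfl]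
  rw [← Complex.ofReal_log (Real.exp_pos _).le, Real.log_exp]
  have hπ : (Real.pi : ℂ) ≠ 0 := Complex.ofReal_ne_zero.2 Real.pi_ne_zero
  have hrc : (r:ℂ) ≠ 0 := Complex.ofReal_ne_zero.2 hr.ne'
  push_cast
  field_simp

lemma poincare_xr {r s t : ℝ} (hr : 0 < r) (hts : t ≤ s) :
    poincare (xr r s : ℂ) (xr r t : ℂ) = Real.pi/(4*r) * (s - t) := by
  set a := Real.exp (Real.pi*s/(2*r)) with ha
  set b := Real.exp (Real.pi*t/(2*r)) with hb
  have hap : 0 < a := Real.exp_pos _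
  have hbp : 0 < b := Real.exp_pos _
  have hab : b ≤ a := by
    rw [ha, hb]
    apply Real.exp_le_exp.2
    have hpi := Real.pi_pos
    have h2r : (0:ℝ) < 2*r := by linarith
    rw [div_le_div_iff₀ h2r h2r]
    exact mul_le_mul_of_nonneg_right (mul_le_mul_of_nonneg_left hts hpi.le) h2r.le
  have hx : xr r s = (a-1)/(a+1) := rfl
  have hx' : xr r t = (b-1)/(b+1) := rfl
  have ha1 : a + 1 ≠ 0 := by linarith
  have hb1 : b + 1 ≠ 0 := by linarith
  have habp : (0:ℝ) < a + b := by linarith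
  have hden : 1 - xr r s * xr r t ≠ 0 := by
    have h2 : 1 - xr r s * xr r t = 2*(a+b)/((a+1)*(b+1)) := by
      rw [hx, hx']; field_simp; ring
    rw [h2]; exact div_ne_zero (by linarith) (mul_ne_zero ha1 hb1)
  have hmb : mb (xr r s : ℂ) (xr r t : ℂ) = (((a-b)/(a+b) : ℝ) : ℂ) := by
    rw [mb, Complex.conj_ofReal]
    rw [show ((xr r s : ℂ) - (xr r t : ℂ)) = (((xr r s - xr r t : ℝ)) : ℂ) by push_cast; ring]
    rw [show ((1:ℂ) - (xr r s : ℂ) * (xr r t : ℂ)) = (((1 - xr r s * xr r t : ℝ)) : ℂ) by push_cast; ring]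
    rw [← Complex.ofReal_div]
    congr 1
    rw [div_eq_div_iff hden habp.ne']
    rw [hx, hx']
    field_simp
    ring
  have hρ : Complex.abs (mb (xr r s : ℂ) (xr r t : ℂ)) = (a-b)/(a+b) := by
    rw [hmb, Complex.abs_ofReal, _root_.abs_of_nonneg (div_nonneg (by linarith) (by linarith))]
  rw [poincare_eq_H, hρ, H]
  have h1 : 1 + (a-b)/(a+b) = 2*a/(a+b) := by field_simp; ring
  have h2 : 1 - (a-b)/(a+b) = 2*b/(a+b) := by field_simp; ring
  rw [h1, h2, show 2*a/(a+b) / (2*b/(a+b)) = a/b by field_simp]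
  rw [ha, hb, ← Real.exp_sub, Real.log_exp]
  field_simp
  ring

lemma one_sub_ne {w : ℂ} (hw : Complex.abs w < 1) : (1:ℂ) - w ≠ 0 := by
  intro h; rw [sub_eq_zero] at h; rw [← h] at hw; simp at hw

lemma Xre_pos {w : ℂ} (hw : Complex.abs w < 1) : 0 < ((1+w)/(1-w)).re := by
  have hw1 := one_sub_ne hw
  rw [Complex.div_re]
  have h1 : Complex.normSq w < 1 := by
    rw [← Complex.sq_abs]; nlinarith [Complex.abs.nonneg w]
  have h2 : 0 < Complex.normSq (1-w) := Complex.normSq_pos.2 hw1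
  have e : (1+w).re * (1-w).re / Complex.normSq (1-w) + (1+w).im * (1-w).im / Complex.normSq (1-w)
      = (1 - Complex.normSq w)/Complex.normSq (1-w) := by
    rw [← add_div]
    congr 1
    simp only [Complex.add_re, Complex.add_im, Complex.sub_re, Complex.sub_im,
      Complex.one_re, Complex.one_im, Complex.normSq_apply]
    ring
  rw [e]; exact div_pos (by linarith) h2

lemma Gm_re_lt {r : ℝ} (hr : 0 < r) {w : ℂ} (hw : w ∈ ball (0:ℂ) 1) : |(Gm r w).re| < r := by
  rw [mem_ball_zero_iff] at hw
  set X := (1+w)/(1-w) with hX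
  have hXre : 0 < X.re := Xre_pos hw
  have harg : |Complex.arg X| < Real.pi/2 :=
    Complex.abs_arg_lt_pi_div_two_iff.2 (Or.inl hXre)
  have hre : (Gm r w).re = -(2*r/Real.pi) * Complex.arg X := by
    have e : Gm r w = (↑(2*r/Real.pi) : ℂ) * (Complex.I * Complex.log X) := by
      rw [Gm, ← hX]; push_cast; ring
    rw [e]
    simp only [Complex.mul_re, Complex.ofReal_re, Complex.ofReal_im, Complex.I_re, Complex.I_im,
      Complex.log_im, Complex.log_re, zero_mul, one_mul, zero_sub, sub_zero, mul_neg, neg_mul]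
  rw [hre, abs_mul, abs_neg, abs_of_pos (by positivity : (0:ℝ) < 2*r/Real.pi)]
  calc 2*r/Real.pi * |Complex.arg X| < 2*r/Real.pi * (Real.pi/2) :=
        mul_lt_mul_of_pos_left harg (by positivity)
  _ = r := by
        rw [div_mul_eq_mul_div, mul_comm]
        rw [show Real.pi/2*(2*r) = r * Real.pi by ring, mul_div_assoc,
          div_self Real.pi_ne_zero, mul_one]

lemma Gm_diffOn (r : ℝ) : DifferentiableOn ℂ (Gm r) (ball (0:ℂ) 1) := by
  intro w hw
  rw [mem_ball_zero_iff] at hw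
  have hw1 := one_sub_ne hw
  have hXre : 0 < ((1+w)/(1-w)).re := Xre_pos hw
  have hdiv : DifferentiableAt ℂ (fun u : ℂ => (1+u)/(1-u)) w := by
    apply DifferentiableAt.div
    · exact (differentiable_const (1:ℂ)).add differentiable_id |>.differentiableAt
    · exact (differentiable_const (1:ℂ)).sub differentiable_id |>.differentiableAt
    · exact hw1
  have hlog : DifferentiableAt ℂ Complex.log ((1+w)/(1-w)) :=
    Complex.differentiableAt_log (Complex.mem_slitPlane_iff.2 (Or.inl hXre))
  exact ((hlog.comp w hdiv).const_mul _).differentiableWithinAt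

lemma key_ub {f : ℂ → ℂ} {Ω : Set ℂ} {r : ℝ} (hr : 0 < r)
    (hf : DifferentiableOn ℂ f Ω) (hmaps : MapsTo f Ω (ball (0:ℂ) 1))
    (hΩ : ∀ z : ℂ, |z.re| < r → z ∈ Ω) {s t : ℝ} (hts : t ≤ s) :
    poincare (f (Complex.I * s)) (f (Complex.I * t)) ≤ Real.pi/(4*r) * (s - t) := by
  have hGmaps : MapsTo (Gm r) (ball (0:ℂ) 1) Ω := fun w hw => hΩ _ (Gm_re_lt hr hw)
  have hcomp : DifferentiableOn ℂ (f ∘ Gm r) (ball (0:ℂ) 1) :=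
    hf.comp (Gm_diffOn r) hGmaps
  have hcm : MapsTo (f ∘ Gm r) (ball (0:ℂ) 1) (ball (0:ℂ) 1) := hmaps.comp hGmaps
  have h := schwarz_pick hcomp hcm (xr_mem r s) (xr_mem r t)
  rw [Function.comp_apply, Function.comp_apply, Gm_xr hr, Gm_xr hr] at h
  calc poincare (f (Complex.I * s)) (f (Complex.I * t))
      ≤ poincare (xr r s : ℂ) (xr r t : ℂ) := h
  _ = Real.pi/(4*r) * (s - t) := poincare_xr hr hts

noncomputable def Fm (z : ℂ) : ℂ :=
  (Complex.exp ((Real.pi/2 : ℝ) * (-Complex.I * z)) - 1) /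
    (Complex.exp ((Real.pi/2 : ℝ) * (-Complex.I * z)) + 1)

lemma Fm_exp_re_pos {z : ℂ} (hz : |z.re| < 1) :
    0 < (Complex.exp ((Real.pi/2 : ℝ) * (-Complex.I * z))).re := by
  rw [Complex.exp_re]
  have hre : ((Real.pi/2 : ℝ) * (-Complex.I * z) : ℂ).im = -(Real.pi/2) * z.re := by
    simp [Complex.mul_im, Complex.mul_re, Complex.I_re, Complex.I_im]
  rw [hre]
  apply mul_pos (Real.exp_pos _)
  apply Real.cos_pos_of_mem_Ioo
  have h := abs_lt.1 hz
  have hπ := Real.pi_pos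
  constructor
  · nlinarith
  · nlinarith

lemma Fm_den_ne {z : ℂ} (hz : |z.re| < 1) :
    Complex.exp ((Real.pi/2 : ℝ) * (-Complex.I * z)) + 1 ≠ 0 := by
  intro h
  have := Fm_exp_re_pos hz
  rw [show Complex.exp ((Real.pi/2 : ℝ) * (-Complex.I * z)) = -1 by linear_combination h] at this
  simp at this
  linarith

lemma Fm_mem {z : ℂ} (hz : |z.re| < 1) : Fm z ∈ ball (0:ℂ) 1 := by
  set E := Complex.exp ((Real.pi/2 : ℝ) * (-Complex.I * z)) with hE
  have hden := Fm_den_ne hz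
  have hpos := Fm_exp_re_pos hz
  rw [mem_ball_zero_iff, Complex.norm_eq_abs, Fm, ← hE, map_div₀,
    div_lt_one (Complex.abs.pos hden)]
  have h1 : Complex.normSq (E - 1) < Complex.normSq (E + 1) := by
    simp only [Complex.normSq_apply, Complex.sub_re, Complex.sub_im, Complex.add_re,
      Complex.add_im, Complex.one_re, Complex.one_im]
    nlinarith
  rw [Complex.abs_apply, Complex.abs_apply]
  exact Real.sqrt_lt_sqrt (Complex.normSq_nonneg _) h1

lemma Fm_diffAt {z : ℂ} (hz : |z.re| < 1) : DifferentiableAt ℂ Fm z := by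
  have hexp : DifferentiableAt ℂ (fun u : ℂ => Complex.exp ((Real.pi/2 : ℝ) * (-Complex.I * u))) z := by
    apply DifferentiableAt.cexp
    apply DifferentiableAt.const_mul
    exact (differentiableAt_id.const_mul _)
  exact (hexp.sub_const 1).div (hexp.add_const 1) (Fm_den_ne hz)

lemma Fm_I (s : ℝ) : Fm (Complex.I * s) = ((xr 1 s : ℝ) : ℂ) := by
  have harg : ((Real.pi/2 : ℝ) : ℂ) * (-Complex.I * (Complex.I * s)) = ((Real.pi*s/(2*1) : ℝ) : ℂ) := by
    push_cast
    rw [show -Complex.I * (Complex.I * s) = (s:ℂ) by rw [← mul_assoc, neg_mul, Complex.I_mul_I]; ring]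
    ring
  rw [Fm, harg, ← Complex.ofReal_exp, xr]
  push_cast
  ring

lemma exists_holo_inverse {f : ℂ → ℂ} {U V : Set ℂ} (hUo : IsOpen U) (hUc : IsPreconnected U)
    (hVo : IsOpen V) (hf : DifferentiableOn ℂ f U) (hbij : Set.BijOn f U V)
    {z₁ z₂ : ℂ} (hz₁ : z₁ ∈ U) (hz₂ : z₂ ∈ U) (hne12 : z₁ ≠ z₂) :
    ∃ g : ℂ → ℂ, DifferentiableOn ℂ g V ∧ (∀ z ∈ U, g (f z) = z) ∧ Set.MapsTo g V U := by
  classical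
  set g := Function.invFunOn f U with hg
  have hleft : ∀ z ∈ U, g (f z) = z := fun z hz => hbij.injOn.leftInvOn_invFunOn hz
  have hright : ∀ v ∈ V, f (g v) = v := fun v hv => hbij.surjOn.rightInvOn_invFunOn hv
  have hmapsg : Set.MapsTo g V U := hbij.surjOn.mapsTo_invFunOn
  have hA : AnalyticOnNhd ℂ f U := hf.analyticOnNhd hUo
  -- open mapping
  have hopen : ∀ s ⊆ U, IsOpen s → IsOpen (f '' s) := by
    rcases hA.is_constant_or_isOpen hUc with ⟨w, hw⟩ | h
    · exact absurd (hbij.injOn hz₁ hz₂ ((hw z₁ hz₁).trans (hw z₂ hz₂).symm)) hne12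
    · exact h
  -- continuity of g
  have hcont : ∀ v ∈ V, ContinuousAt g v := by
    intro v hv
    have hu : g v ∈ U := hmapsg hv
    rw [ContinuousAt]
    intro N hN
    obtain ⟨W, hWN, hWo, hWu⟩ := _root_.mem_nhds_iff.1 hN
    have himg : f '' (W ∩ U) ∈ 𝓝 v := by
      apply (hopen _ inter_subset_right (hWo.inter hUo)).mem_nhds
      exact ⟨g v, ⟨hWu, hu⟩, hright v hv⟩
    apply Filter.mem_of_superset himg
    rintro y ⟨x, ⟨hxW, hxU⟩, rfl⟩
    show g (f x) ∈ N
    rw [hleft x hxU]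
    exact hWN hxW
  -- differentiability at points with nonvanishing derivative
  have hgood : ∀ v ∈ V, deriv f (g v) ≠ 0 → DifferentiableAt ℂ g v := by
    intro v hv hd
    have hu : g v ∈ U := hmapsg hv
    have hfd : HasDerivAt f (deriv f (g v)) (g v) :=
      ((hf.differentiableAt (hUo.mem_nhds hu)).hasDerivAt)
    have hfg : ∀ᶠ y in 𝓝 v, f (g y) = y := by
      filter_upwards [hVo.mem_nhds hv] using hright
    exact (HasDerivAt.of_local_left_inverse (hcont v hv) hfd hd hfg).differentiableAt
  refine ⟨g, ?_, hleft, hmapsg⟩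
  intro v hv
  by_cases hd : deriv f (g v) ≠ 0
  · exact (hgood v hv hd).differentiableWithinAt
  push_neg at hd
  set u := g v with hu'
  have hu : u ∈ U := hmapsg hv
  -- the zeros of deriv f are isolated
  have hder_ne : ∀ᶠ z in 𝓝[≠] u, deriv f z ≠ 0 := by
    by_contra hcon
    rw [Filter.not_eventually] at hcon
    simp only [not_not] at hcon
    have hzero : EqOn (deriv f) 0 U :=
      (hA.deriv).eqOn_zero_of_preconnected_of_frequently_eq_zero hUc hu hcon
    -- then f is constant near u, contradicting injectivity
    obtain ⟨ε, hε, hball⟩ := Metric.isOpen_iff.1 hUo u hu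
    have hconst : ∀ x ∈ Metric.ball u ε, f x = f u := by
      intro x hx
      apply (convex_ball u ε).is_const_of_fderivWithin_eq_zero
        (hf.mono hball) ?_ hx (Metric.mem_ball_self hε)
      intro z hz
      have hdz : DifferentiableAt ℂ f z := hf.differentiableAt (hUo.mem_nhds (hball hz))
      have : deriv f z = 0 := hzero (hball hz)
      have hfd : HasFDerivAt f (ContinuousLinearMap.smulRight (1 : ℂ →L[ℂ] ℂ) (deriv f z)) z :=
        hdz.hasDerivAt.hasFDerivAt
      rw [this] at hfd
      have : fderivWithin ℂ f (Metric.ball u ε) z = ContinuousLinearMap.smulRight (1 : ℂ →L[ℂ] ℂ) 0 :=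
        (hfd.hasFDerivWithinAt).fderivWithin (Metric.isOpen_ball.uniqueDiffOn z hz)
      rw [this]
      ext1
      simp
    -- two distinct points in the ball map to the same value
    have hx : u + (ε/2 : ℝ) ∈ Metric.ball u ε := by
      rw [Metric.mem_ball, Complex.dist_eq, add_sub_cancel_left, Complex.norm_real, Real.norm_eq_abs,
        abs_of_pos (by linarith : (0:ℝ) < ε/2)]
      linarith
    have heq := hconst _ hx
    have : u + (ε/2:ℝ) = u := hbij.injOn (hball hx) hu heq
    simp only [add_eq_left, Complex.ofReal_eq_zero] at this
    linarith
  -- now use the removable singularity theorem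
  have hcg : ContinuousAt g v := hcont v hv
  have hcg' : Filter.Tendsto g (𝓝 v) (𝓝 u) := hcg
  have hVne : ∀ᶠ y in 𝓝[≠] v, y ∈ V := by
    apply eventually_nhdsWithin_of_eventually_nhds
    exact eventually_of_mem (hVo.mem_nhds hv) (fun y hy => hy)
  have h1 : ∀ᶠ z in 𝓝 u, z ≠ u → deriv f z ≠ 0 := by
    have := eventually_nhdsWithin_iff.1 hder_ne
    filter_upwards [this] with z hz hzne
    exact hz (Set.mem_compl_singleton_iff.2 hzne)
  have h4 : ∀ᶠ y in 𝓝[≠] v, (g y ≠ u → deriv f (g y) ≠ 0) :=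
    Filter.Eventually.filter_mono nhdsWithin_le_nhds (hcg'.eventually h1)
  have hpun : ∀ᶠ y in 𝓝[≠] v, DifferentiableAt ℂ g y := by
    filter_upwards [hVne, h4, self_mem_nhdsWithin] with y hyV himp hyne
    apply hgood y hyV
    apply himp
    intro hgy
    apply (Set.mem_compl_singleton_iff.1 hyne)
    calc y = f (g y) := (hright y hyV).symm
    _ = f (g v) := by rw [hgy, hu']
    _ = v := hright v hv
  exact ((Complex.analyticAt_of_differentiable_on_punctured_nhds_of_continuousAt hpun hcg).differentiableAt).differentiableWithinAt

-- ====== new material ======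
def Sset : Set ℂ := {z : ℂ | -1 < z.re ∧ z.re < 1}

lemma Sset_open : IsOpen Sset := by
  have : Sset = {z : ℂ | -1 < z.re} ∩ {z : ℂ | z.re < 1} := rfl
  rw [this]
  exact (isOpen_lt continuous_const Complex.continuous_re).inter
    (isOpen_lt Complex.continuous_re continuous_const)

lemma Sset_preconn : IsPreconnected Sset := by
  have hc : Convex ℝ Sset := by
    have : Sset = {z : ℂ | -1 < z.re} ∩ {z : ℂ | z.re < 1} := rfl
    rw [this]
    exact (convex_halfSpace_re_gt (-1)).inter (convex_halfSpace_re_lt 1)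
  exact hc.isPreconnected

lemma I_mul_mem_Sset (s : ℝ) : Complex.I * s ∈ Sset := by
  constructor <;> simp [Complex.mul_re]

lemma strip_lb {hS : ℂ → ℂ} (hSholo : DifferentiableOn ℂ hS Sset)
    (hSbij : Set.BijOn hS Sset (ball (0:ℂ) 1)) {s t : ℝ} (hts : t ≤ s) :
    Real.pi/(4:ℝ) * (s - t) ≤ poincare (hS (Complex.I * s)) (hS (Complex.I * t)) := by
  have h0 : (0:ℂ) ∈ Sset := by constructor <;> norm_num
  have hhalf : (1/2 : ℂ) ∈ Sset := by constructor <;> norm_num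
  obtain ⟨g, hgdiff, hgleft, hgmaps⟩ := exists_holo_inverse Sset_open Sset_preconn
    isOpen_ball hSholo hSbij h0 hhalf (by norm_num)
  have habs : ∀ z ∈ Sset, |z.re| < 1 := by
    intro z hz; rw [abs_lt]; exact ⟨hz.1, hz.2⟩
  have hqdiff : DifferentiableOn ℂ (Fm ∘ g) (ball (0:ℂ) 1) := by
    intro v hv
    exact DifferentiableAt.comp_differentiableWithinAt v
      (Fm_diffAt (habs _ (hgmaps hv))) (hgdiff v hv)
  have hqmaps : MapsTo (Fm ∘ g) (ball (0:ℂ) 1) (ball (0:ℂ) 1) := by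
    intro v hv
    exact Fm_mem (habs _ (hgmaps hv))
  have hmem_s : hS (Complex.I * s) ∈ ball (0:ℂ) 1 := hSbij.mapsTo (I_mul_mem_Sset s)
  have hmem_t : hS (Complex.I * t) ∈ ball (0:ℂ) 1 := hSbij.mapsTo (I_mul_mem_Sset t)
  have h := schwarz_pick hqdiff hqmaps hmem_s hmem_t
  have es : (Fm ∘ g) (hS (Complex.I * s)) = ((xr 1 s : ℝ) : ℂ) := by
    rw [Function.comp_apply, hgleft _ (I_mul_mem_Sset s), Fm_I]
  have et : (Fm ∘ g) (hS (Complex.I * t)) = ((xr 1 t : ℝ) : ℂ) := by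
    rw [Function.comp_apply, hgleft _ (I_mul_mem_Sset t), Fm_I]
  rw [es, et, poincare_xr one_pos hts] at h
  calc Real.pi/(4:ℝ) * (s-t) = Real.pi/(4*1) * (s-t) := by norm_num
  _ ≤ poincare (hS (Complex.I * s)) (hS (Complex.I * t)) := h

lemma I_mul_mem_D (y : ℕ → ℝ) (s : ℝ) : Complex.I * s ∈ ⋂ k, Dslit y k := by
  rw [Set.mem_iInter]
  intro k
  intro ⟨h1, _⟩
  have hre : (Complex.I * (s:ℂ)).re = 0 := by simp [Complex.mul_re]
  have hk : (0:ℝ) < 1 + 1/(k+1 : ℝ) := by positivity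
  rcases h1 with h | h <;> rw [hre] at h <;> linarith

lemma abs_lt_mem_D {y : ℕ → ℝ} {z : ℂ} (h : |z.re| < 1) : z ∈ ⋂ k, Dslit y k := by
  rw [Set.mem_iInter]
  intro k
  intro ⟨h1, _⟩
  have hk : (1:ℝ) < 1 + 1/(k+1 : ℝ) := by
    have : (0:ℝ) < 1/(k+1:ℝ) := by positivity
    linarith
  rw [abs_lt] at h
  rcases h1 with hh | hh <;> rw [hh] at h <;> [linarith [h.2]; linarith [h.1]]

lemma abs_lt_mem_Dk {y : ℕ → ℝ} {k : ℕ} {z : ℂ} (h : |z.re| < 1 + 1/(k+1:ℝ)) :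
    z ∈ Dslit y k := by
  intro ⟨h1, _⟩
  rw [abs_lt] at h
  rcases h1 with hh | hh <;> rw [hh] at h <;> [linarith [h.2]; linarith [h.1]]

end PM

open PM

/-- in the non-regular pre-model example, with `S = {-1 < Re z < 1}`,
`D = ⋂_k D_k`, and a strictly decreasing sequence `α_k → -∞` (with `α_{k+1} ≤ α_k - 1`,
`α_0 ≤ -1/2`) such that
`k_D(i(α_k+1/2), i(α_k-1/2)) ≤ (1 + 1/(2k))·k_{D_k}(i(α_k+1/2), i(α_k-1/2))`,
one gets `k_S(0, i(α_k+1/2)) - k_D(0, i(α_k+1/2)) ≥ (π/8)·∑_{j=1}^{k-1} 1/(1+j)`,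
hence `limsup_{t→+∞} [k_S(0,-it) - k_D(0,-it)] = +∞`. Hyperbolic distances of the
domains are transported from the disc via Riemann maps. -/
theorem non_regular_premodel_divergence (y : ℕ → ℝ)
    (hy : StrictAnti y) (hylim : Tendsto y atTop atBot)
    (α : ℕ → ℝ) (hα : StrictAnti α) (hαlim : Tendsto α atTop atBot)
    (hαgap : ∀ k : ℕ, α (k + 1) + 1 ≤ α k) (hα0 : α 0 ≤ -(1/2))
    -- Riemann maps of `S`, of `D = ⋂ k, Dslit y k`, and of each `Dslit y k`
    (hS : ℂ → ℂ) (hSholo : DifferentiableOn ℂ hS {z : ℂ | -1 < z.re ∧ z.re < 1})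
    (hSbij : Set.BijOn hS {z : ℂ | -1 < z.re ∧ z.re < 1} (Metric.ball (0:ℂ) 1))
    (hD : ℂ → ℂ) (hDholo : DifferentiableOn ℂ hD (⋂ k, Dslit y k))
    (hDbij : Set.BijOn hD (⋂ k, Dslit y k) (Metric.ball (0:ℂ) 1))
    (hK : ℕ → ℂ → ℂ) (hKholo : ∀ k, DifferentiableOn ℂ (hK k) (Dslit y k))
    (hKbij : ∀ k, Set.BijOn (hK k) (Dslit y k) (Metric.ball (0:ℂ) 1))
    -- the key localization estimate of the construction
    (hkey : ∀ k : ℕ,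
      poincare (hD (Complex.I * (α k + 1/2))) (hD (Complex.I * (α k - 1/2))) ≤
        (1 + 1 / (2 * (k + 1 : ℝ))) *
          poincare (hK k (Complex.I * (α k + 1/2))) (hK k (Complex.I * (α k - 1/2)))) :
    (∀ m : ℕ,
      Real.pi / 8 * ∑ j ∈ Finset.range m, (1 : ℝ) / (j + 2) ≤
        poincare (hS 0) (hS (Complex.I * (α m + 1/2))) -
          poincare (hD 0) (hD (Complex.I * (α m + 1/2)))) ∧
    limsup (fun t : ℝ =>
        ((poincare (hS 0) (hS (-(Complex.I * t))) -
          poincare (hD 0) (hD (-(Complex.I * t))) : ℝ) : EReal)) atTop = ⊤ := by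
  have pi_pos := Real.pi_pos
  set a : ℕ → ℝ := fun m => α m + 1/2 with ha
  set b : ℕ → ℝ := fun m => α m - 1/2 with hb
  have e0 : Complex.I * ((0:ℝ):ℂ) = 0 := by simp
  have eA : ∀ m : ℕ, Complex.I * ((α m : ℂ) + 1/2) = Complex.I * ((a m : ℝ):ℂ) := by
    intro m; rw [ha]; push_cast; ring
  have eB : ∀ m : ℕ, Complex.I * ((α m : ℂ) - 1/2) = Complex.I * ((b m : ℝ):ℂ) := by
    intro m; rw [hb]; push_cast; ring
  have hUBD : ∀ s t : ℝ, t ≤ s →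
      poincare (hD (Complex.I * s)) (hD (Complex.I * t)) ≤ Real.pi/4*(s-t) := by
    intro s t h
    have := key_ub one_pos hDholo hDbij.mapsTo (fun z hz => abs_lt_mem_D hz) h
    rw [show (4*(1:ℝ)) = 4 by norm_num] at this
    exact this
  have hUBK : ∀ k : ℕ, ∀ s t : ℝ, t ≤ s →
      poincare (hK k (Complex.I * s)) (hK k (Complex.I * t))
        ≤ Real.pi/(4*(1+1/(k+1:ℝ)))*(s-t) := by
    intro k s t h
    exact key_ub (by positivity) (hKholo k) (hKbij k).mapsTo
      (fun z hz => abs_lt_mem_Dk hz) h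
  have hDmem : ∀ s : ℝ, hD (Complex.I * s) ∈ Metric.ball (0:ℂ) 1 :=
    fun s => hDbij.mapsTo (I_mul_mem_D y s)
  have hab : ∀ m : ℕ, b m = a m - 1 := by intro m; rw [ha, hb]; ring
  have hba : ∀ m : ℕ, a (m+1) ≤ b m := by
    intro m; rw [ha, hb]; simp only []; linarith [hαgap m]
  have ha0 : a 0 ≤ 0 := by rw [ha]; simp only []; linarith
  have haanti : ∀ m : ℕ, a m ≤ 0 := by
    intro m
    rcases Nat.eq_zero_or_pos m with h | h
    · rw [h]; exact ha0
    · have : α m ≤ α 0 := (hα.antitone (Nat.zero_le m))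
      rw [ha]; simp only []; rw [ha] at ha0; simp only [] at ha0; linarith
  -- the inductive chain for k_D
  have hchain : ∀ m : ℕ, poincare (hD (Complex.I * ((0:ℝ):ℂ))) (hD (Complex.I * ((a m : ℝ):ℂ)))
      ≤ Real.pi/4*(0 - a m) - Real.pi/8 * ∑ j ∈ Finset.range m, (1:ℝ)/(j+2) := by
    intro m
    induction m with
    | zero =>
      simpa using hUBD 0 (a 0) ha0
    | succ m ih =>
      have tri1 := poincare_triangle (hDmem 0) (hDmem (a m)) (hDmem (a (m+1)))
      have tri2 := poincare_triangle (hDmem (a m)) (hDmem (b m)) (hDmem (a (m+1)))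
      have hk := hkey m
      rw [eA m, eB m] at hk
      have hK1 : poincare (hK m (Complex.I * ((a m : ℝ):ℂ))) (hK m (Complex.I * ((b m : ℝ):ℂ)))
          ≤ Real.pi/(4*(1+1/(m+1:ℝ))) * (a m - b m) :=
        hUBK m (a m) (b m) (by rw [hab]; linarith)
      have hfac : (0:ℝ) ≤ 1 + 1/(2*(m+1:ℝ)) := by positivity
      have hmid := hk.trans (mul_le_mul_of_nonneg_left hK1 hfac)
      have hambm : a m - b m = 1 := by rw [hab]; ring
      rw [hambm, mul_one] at hmid
      have harith : (1 + 1/(2*(m+1:ℝ))) * (Real.pi/(4*(1+1/(m+1:ℝ))))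
          = Real.pi/4 - Real.pi/8*(1/(m+2:ℝ)) := by
        have h1 : (m+1:ℝ) ≠ 0 := by positivity
        have h2 : (m+2:ℝ) ≠ 0 := by positivity
        field_simp
        ring
      rw [harith] at hmid
      have hend := hUBD (b m) (a (m+1)) (hba m)
      have hsum : ∑ j ∈ Finset.range (m+1), (1:ℝ)/(j+2)
          = (∑ j ∈ Finset.range m, (1:ℝ)/(j+2)) + 1/(m+2:ℝ) :=
        Finset.sum_range_succ _ m
      have exp1 : Real.pi/4*(b m - a (m+1)) = Real.pi/4*(a m - 1 - a (m+1)) := by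
        rw [hab m]
      rw [hsum]
      linarith [tri1, tri2, ih, hmid, hend, exp1]
  -- part 1, normalized points
  have part1' : ∀ m : ℕ,
      Real.pi / 8 * ∑ j ∈ Finset.range m, (1 : ℝ) / (j + 2) ≤
        poincare (hS (Complex.I * ((0:ℝ):ℂ))) (hS (Complex.I * ((a m : ℝ):ℂ))) -
          poincare (hD (Complex.I * ((0:ℝ):ℂ))) (hD (Complex.I * ((a m : ℝ):ℂ))) := by
    intro m
    have hlb := strip_lb hSholo hSbij (haanti m)
    have hch := hchain m
    linarith [hlb, hch]
  have part1 : ∀ m : ℕ,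
      Real.pi / 8 * ∑ j ∈ Finset.range m, (1 : ℝ) / (j + 2) ≤
        poincare (hS 0) (hS (Complex.I * (α m + 1/2))) -
          poincare (hD 0) (hD (Complex.I * (α m + 1/2))) := by
    intro m
    have := part1' m
    rw [e0, ← eA m] at this
    exact this
  refine ⟨part1, ?_⟩
  -- divergence of the harmonic-type sum
  have hsum0 : ∀ m : ℕ, ∑ j ∈ Finset.range m, (1:ℝ)/(j+2)
      = (∑ i ∈ Finset.range (m+1), (1:ℝ)/(i+1)) - 1 := by
    intro m
    rw [Finset.sum_range_succ']
    have : ∀ i ∈ Finset.range m, (1:ℝ)/((i+1:ℕ)+1) = (1:ℝ)/(i+2) := by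
      intro i _; push_cast; ring_nf
    rw [Finset.sum_congr rfl this]
    norm_num
  have h2 : Tendsto (fun m : ℕ => Real.pi/8 * ∑ j ∈ Finset.range m, (1:ℝ)/(j+2)) atTop atTop := by
    apply Filter.Tendsto.const_mul_atTop (by positivity : (0:ℝ) < Real.pi/8)
    have hcomp : Tendsto (fun m : ℕ => ∑ i ∈ Finset.range (m+1), (1:ℝ)/(i+1)) atTop atTop :=
      Real.tendsto_sum_range_one_div_nat_succ_atTop.comp (tendsto_add_atTop_nat 1)
    have := tendsto_atTop_add_const_right atTop (-1 : ℝ) hcomp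
    apply this.congr
    intro m
    rw [hsum0 m]
    ring
  have h1 : Tendsto (fun m : ℕ => -(a m)) atTop atTop := by
    apply tendsto_neg_atBot_atTop.comp
    have : Tendsto (fun m : ℕ => α m + 1/2) atTop atBot :=
      tendsto_atBot_add_const_right atTop (1/2 : ℝ) hαlim
    exact this
  apply (EReal.eq_top_iff_forall_lt _).2
  intro yR
  have hfreq : ∃ᶠ t : ℝ in atTop, ((yR+1:ℝ) : EReal) ≤
      ((poincare (hS 0) (hS (-(Complex.I * t))) -
        poincare (hD 0) (hD (-(Complex.I * t))) : ℝ) : EReal) := by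
    rw [frequently_atTop]
    intro T
    obtain ⟨m, hm1, hm2⟩ := ((h1.eventually_ge_atTop T).and (h2.eventually_ge_atTop (yR+1))).exists
    refine ⟨-(a m), hm1, ?_⟩
    rw [EReal.coe_le_coe_iff]
    have ept2 : -(Complex.I * ((-(a m) : ℝ):ℂ)) = Complex.I * ((a m : ℝ):ℂ) := by push_cast; ring
    rw [ept2]
    have := part1' m
    rw [e0] at this
    linarith [this, hm2]
  have hle := Filter.le_limsup_of_frequently_le' hfreq
  calc (yR : EReal) < ((yR+1:ℝ) : EReal) := EReal.coe_lt_coe_iff.2 (lt_add_one yR)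
  _ ≤ _ := hle
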